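/- Let V be a valuation ring with fraction field K, and let B be a nonzero K-algebra which is finite as a K-module. Then there exists a V-subalgebra C of B such that: C is finite as a V-module; C is flat (equivalently, torsion-free) as a V-module; the K-subalgebra of B generated by C is all of B (equivalently, the natural map C ⊗_V K → B is bijective); and the induced map Spec C → Spec V is surjective. -/

import Mathlib

/-- Let `V` be a valuation ring with fraction field `K` and `B` a nonzero finite
`K`-algebra.  Then there is a `V`-subalgebra `C ⊆ B` which is finite and flat as a
`V`-module, generates `B` as a `K`-algebra, and such that `Spec C → Spec V` is
surjective. -/
theorem exists_finite_flat_surjective_model_over_valuationRing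
    {V K B : Type*} [CommRing V] [IsDomain V] [ValuationRing V]
    [Field K] [Algebra V K] [IsFractionRing V K]
    [CommRing B] [Nontrivial B] [Algebra K B] [Module.Finite K B]
    [Algebra V B] [IsScalarTower V K B] :
    ∃ C : Subalgebra V B, Module.Finite V C ∧ Module.Flat V C ∧
      Algebra.adjoin K (C : Set B) = ⊤ ∧
      Function.Surjective (PrimeSpectrum.comap (algebraMap V C)) := by
  classical
  have hVK : Function.Injective (algebraMap V K) := IsFractionRing.injective V K
  have hKB : Function.Injective (algebraMap K B) := (algebraMap K B).injective
  -- a basis of `B` over `K` containing `1`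
  have hli : LinearIndepOn K id ({1} : Set B) :=
    LinearIndepOn.singleton one_ne_zero
  set ι := hli.extend (Set.subset_univ _) with hι
  let e : Module.Basis ι K B := Module.Basis.extend hli
  haveI : Fintype ι := FiniteDimensional.fintypeBasisIndex e
  have h1ι : (1 : B) ∈ ι := hli.subset_extend _ rfl
  let i0 : ι := ⟨1, h1ι⟩
  have he0 : e i0 = 1 := Module.Basis.extend_apply_self hli i0
  -- common denominator for the structure constants
  obtain ⟨d, hd⟩ := IsLocalization.exist_integer_multiples_of_finite
    (nonZeroDivisors V) (fun p : ι × ι × ι => e.repr (e p.1 * e p.2.1) p.2.2)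
  have hdK : algebraMap V K (d : V) ≠ 0 := by
    intro h
    exact nonZeroDivisors.coe_ne_zero d (hVK (by simpa using h))
  set dK : K := algebraMap V K (d : V) with hdKdef
  -- rescale the basis
  let u : ι → Kˣ := fun i => if i = i0 then 1 else Units.mk0 dK hdK
  let e' : Module.Basis ι K B := e.unitsSMul u
  have he' : ∀ i, e' i = (u i : K) • e i := fun i => e.unitsSMul_apply i
  have he'0 : e' i0 = 1 := by
    simp [he', u, he0]
  have he'ne : ∀ i, i ≠ i0 → e' i = dK • e i := by
    intro i hi
    simp [he', u, hi]
  set M : Submodule V B := Submodule.span V (Set.range e') with hM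
  have hmem : ∀ i, e' i ∈ M := fun i => Submodule.subset_span ⟨i, rfl⟩
  have h1M : (1 : B) ∈ M := he'0 ▸ hmem i0
  -- multiplicative closure on the generators
  have key : ∀ i j, e' i * e' j ∈ M := by
    intro i j
    by_cases hi : i = i0
    · rw [hi, he'0, one_mul]; exact hmem j
    by_cases hj : j = i0
    · rw [hj, he'0, mul_one]; exact hmem i
    rw [he'ne i hi, he'ne j hj, smul_mul_smul_comm]
    rw [← e.sum_repr (e i * e j), Finset.smul_sum]
    refine Submodule.sum_mem _ fun k _ => ?_
    obtain ⟨a, ha⟩ := hd (i, j, k)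
    have ha' : algebraMap V K a = dK * e.repr (e i * e j) k := by
      simpa [Algebra.smul_def] using ha
    rw [smul_smul]
    by_cases hk : k = i0
    · have : dK * dK * e.repr (e i * e j) k = algebraMap V K ((d : V) * a) := by
        rw [(algebraMap V K).map_mul, ha']; ring
      rw [this, hk, he0, ← he'0, algebraMap_smul]
      exact Submodule.smul_mem _ _ (hmem i0)
    · have : (dK * dK * e.repr (e i * e j) k) • e k = a • e' k := by
        rw [he'ne k hk, ← algebraMap_smul K a, smul_smul, ha']
        congr 1
        ring
      rw [this]
      exact Submodule.smul_mem _ _ (hmem k)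
  have hmul : ∀ x y : B, x ∈ M → y ∈ M → x * y ∈ M := by
    have hle : M * M ≤ M := by
      rw [hM, Submodule.span_mul_span, Submodule.span_le]
      rintro z ⟨x, ⟨i, rfl⟩, y, ⟨j, rfl⟩, rfl⟩
      exact key i j
    exact fun x y hx hy => hle (Submodule.mul_mem_mul hx hy)
  -- the subalgebra
  refine ⟨M.toSubalgebra h1M hmul, ?_, ?_, ?_, ?_⟩
  · -- finite
    exact Module.Finite.span_of_finite V (Set.finite_range e')
  · -- flat: M is free on e'
    have hinj : Function.Injective fun r : V => r • (1 : K) := by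
      simpa [Algebra.smul_def] using hVK
    have hliV : LinearIndependent V e' :=
      e'.linearIndependent.restrict_scalars hinj
    have : Module.Free V M := Module.Free.of_basis (Module.Basis.span hliV)
    exact (Module.Flat.of_free (R := V) (M := M) :)
  · -- generates B over K
    have hsub : ∀ i, e i ∈ Algebra.adjoin K ((M.toSubalgebra h1M hmul : Set B)) := by
      intro i
      have h1 : e' i ∈ Algebra.adjoin K ((M.toSubalgebra h1M hmul : Set B)) :=
        Algebra.subset_adjoin (hmem i)
      have : e i = (u i)⁻¹ • e' i := by
        rw [he' i, ← Units.smul_def, inv_smul_smul]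
      rw [this]
      exact Subalgebra.smul_mem _ h1 _
    rw [eq_top_iff]
    intro x _
    have hx : x ∈ Submodule.span K (Set.range e) := by rw [e.span_eq]; trivial
    have : Submodule.span K (Set.range e) ≤
        Subalgebra.toSubmodule (Algebra.adjoin K ((M.toSubalgebra h1M hmul : Set B))) := by
      rw [Submodule.span_le]
      rintro _ ⟨i, rfl⟩
      exact hsub i
    exact this hx
  · -- Spec surjective
    set C := M.toSubalgebra h1M hmul with hC
    haveI : Module.Finite V C := Module.Finite.span_of_finite V (Set.finite_range e')
    haveI : Algebra.IsIntegral V C := Algebra.IsIntegral.of_finite V C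
    have hinjC : Function.Injective (algebraMap V C) := by
      intro x y hxy
      have : algebraMap V B x = algebraMap V B y := by
        have h := congrArg (Subtype.val : C → B) hxy
        rwa [Subalgebra.coe_algebraMap, Subalgebra.coe_algebraMap] at h
      rw [IsScalarTower.algebraMap_eq V K B] at this
      exact hVK (hKB this)
    intro p
    obtain ⟨Q, -, hQprime, hQ⟩ :=
      Ideal.exists_ideal_over_prime_of_isIntegral p.asIdeal ⊥ (by
        intro x hx
        have : algebraMap V C x = 0 := by simpa using hx
        have : x = 0 := hinjC (by simpa using this)
        simp [this])
    exact ⟨⟨Q, hQprime⟩, PrimeSpectrum.ext hQ⟩
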